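/- For all i ≥ 4, W_i = W_{i-2} · (2 ⊕ W_{i-3})² · (4 ⊕ W_{i-4}). (For example, W_5 = 01223 · 234 · 234 · 45.) -/
import Mathlib


/-- The morphism `phi` on the alphabet `ℕ`: `phi (2i) = (2i)(2i+1)` and `phi (2i+1) = (2i+2)`. -/
def phi (a : ℕ) : List ℕ := if a % 2 = 0 then [a, a + 1] else [a + 1]

/-- The finite ZWW words: `W n = phi^n(0)`, so `W 0 = 0`, `W 1 = 01`, `W 2 = 012`, `W 3 = 01223`. -/
def W (n : ℕ) : List ℕ := (fun w => w.flatMap phi)^[n] [0]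

lemma phi_shift (a : ℕ) : phi (a + 2) = (phi a).map (· + 2) := by
  unfold phi
  rcases Nat.mod_two_eq_zero_or_one a with h | h <;> simp [h, Nat.add_mod_right]

lemma flatMap_shift (w : List ℕ) :
    (w.map (· + 2)).flatMap phi = (w.flatMap phi).map (· + 2) := by
  induction w with
  | nil => simp
  | cons a w ih => simp [List.flatMap_cons, ih, phi_shift]

lemma W_succ (n : ℕ) : W (n + 1) = (W n).flatMap phi := by
  simp [W, Function.iterate_succ_apply']

lemma W_rec : ∀ n : ℕ, W (n + 2) = W (n + 1) ++ (W n).map (· + 2) := by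
  intro n
  induction n with
  | zero => decide
  | succ n ih =>
    rw [show n + 1 + 2 = (n + 2) + 1 by ring, W_succ, ih, List.flatMap_append,
      flatMap_shift, ← W_succ, ← W_succ, show n + 1 + 1 = n + 2 from rfl, ih,
      List.append_assoc]

/-- For all `i ≥ 4`, `W i = W (i-2) · (2 ⊕ W (i-3))² · (4 ⊕ W (i-4))`. -/
theorem zww_square_factorisation : ∀ i : ℕ, 4 ≤ i →
    W i = W (i - 2) ++ ((W (i - 3)).map (· + 2) ++ (W (i - 3)).map (· + 2))
      ++ (W (i - 4)).map (· + 4) := by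
  intro i hi
  obtain ⟨n, rfl⟩ : ∃ n, i = n + 4 := ⟨i - 4, by omega⟩
  simp only [show n + 4 - 2 = n + 2 from rfl, show n + 4 - 3 = n + 1 from rfl,
    show n + 4 - 4 = n from rfl]
  have h1 := W_rec (n + 2)
  have h2 := W_rec (n + 1)
  have h3 := W_rec n
  rw [show n + 2 + 2 = n + 4 by ring] at h1
  rw [show n + 1 + 2 = n + 3 by ring] at h2
  rw [h1, h2, h3]
  simp [List.map_map, Function.comp]
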